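/- Let Q₁, Q₂, H₁, H₂ be bounded operators on a complex Hilbert space satisfying the N=1² algebra: {Q_i, Q_i†} = 2H_i for i ∈ {1,2}, {Q_i, Q_j†} = 0 for i ≠ j, and {Q_i, Q_j} = 0 for all i, j. Let t₁, t₂ be complex numbers with t₁ ≠ 0 and t₂ ≠ 0, and set Q_t = t₁Q₁ + t₂Q₂. Then the kernel of {Q_t, Q_t†} equals ker H₁ ∩ ker H₂. (Physically: away from the two special points of the ℂP¹ family, the vacuum spectrum consists exactly of states annihilated by both Hamiltonians.) -/

import Mathlib

open ContinuousLinearMap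
open scoped InnerProductSpace ComplexConjugate

private theorem n1sq_key {E : Type*} [NormedAddCommGroup E] [InnerProductSpace ℂ E]
    [CompleteSpace E] (Q : E →L[ℂ] E) (x : E) :
    ⟪x, (Q * adjoint Q + adjoint Q * Q) x⟫_ℂ
      = ((‖adjoint Q x‖ ^ 2 + ‖Q x‖ ^ 2 : ℝ) : ℂ) := by
  have h1 := adjoint_inner_left Q (adjoint Q x) x
  have h2 := adjoint_inner_right Q x (Q x)
  simp only [add_apply, ContinuousLinearMap.mul_apply, inner_add_right, ← h1, h2,
    inner_self_eq_norm_sq_to_K]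
  norm_cast

private theorem n1sq_vanish {E : Type*} [NormedAddCommGroup E] [InnerProductSpace ℂ E]
    [CompleteSpace E] (Q H : E →L[ℂ] E)
    (h : Q * adjoint Q + adjoint Q * Q = (2 : ℂ) • H) (x : E) :
    H x = 0 ↔ Q x = 0 ∧ adjoint Q x = 0 := by
  constructor
  · intro hx
    have h0 : ((‖adjoint Q x‖ ^ 2 + ‖Q x‖ ^ 2 : ℝ) : ℂ) = 0 := by
      rw [← n1sq_key Q x, h]
      simp [hx]
    have hr : (‖adjoint Q x‖ ^ 2 + ‖Q x‖ ^ 2 : ℝ) = 0 := by exact_mod_cast h0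
    have h1 : ‖Q x‖ = 0 := by nlinarith [sq_nonneg ‖adjoint Q x‖, sq_nonneg ‖Q x‖]
    have h2 : ‖adjoint Q x‖ = 0 := by
      nlinarith [sq_nonneg ‖adjoint Q x‖, sq_nonneg ‖Q x‖]
    exact ⟨norm_eq_zero.mp h1, norm_eq_zero.mp h2⟩
  · rintro ⟨h1, h2⟩
    have := congrArg (fun T : E →L[ℂ] E => T x) h
    simp only [add_apply, ContinuousLinearMap.mul_apply, h1, h2, map_zero, smul_apply] at this
    have h2' : (2 : ℂ) • H x = 0 := by rw [← this]; simp
    simpa using (smul_eq_zero.mp h2').resolve_left (by norm_num)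

private theorem n1sq_opid {E : Type*} [NormedAddCommGroup E] [InnerProductSpace ℂ E]
    [CompleteSpace E] (Q₁ Q₂ : E →L[ℂ] E)
    (h12 : Q₁ * adjoint Q₂ + adjoint Q₂ * Q₁ = 0)
    (h21 : Q₂ * adjoint Q₁ + adjoint Q₁ * Q₂ = 0)
    (t₁ t₂ : ℂ) (Qt : E →L[ℂ] E) (hQt : Qt = t₁ • Q₁ + t₂ • Q₂) :
    Qt * adjoint Qt + adjoint Qt * Qt
      = (t₁ * conj t₁) • (Q₁ * adjoint Q₁ + adjoint Q₁ * Q₁)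
      + (t₂ * conj t₂) • (Q₂ * adjoint Q₂ + adjoint Q₂ * Q₂) := by
  have ha : adjoint Qt = conj t₁ • adjoint Q₁ + conj t₂ • adjoint Q₂ := by
    rw [hQt, map_add, map_smulₛₗ, map_smulₛₗ]
  have c12 : adjoint Q₂ * Q₁ = -(Q₁ * adjoint Q₂) := eq_neg_of_add_eq_zero_right h12
  have c21 : adjoint Q₁ * Q₂ = -(Q₂ * adjoint Q₁) := eq_neg_of_add_eq_zero_right h21
  rw [ha, hQt]
  simp only [add_mul, mul_add, smul_mul_assoc, mul_smul_comm, smul_smul, c12, c21,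
    smul_neg, smul_add]
  module

/-- In the N=1² algebra, for `t₁ ≠ 0` and `t₂ ≠ 0`, the kernel
of `{Q_t, Q_t†}` equals `ker H₁ ⊓ ker H₂`. -/
theorem n1sq_generic_vacua
    {E : Type*} [NormedAddCommGroup E] [InnerProductSpace ℂ E] [CompleteSpace E]
    (Q₁ Q₂ H₁ H₂ : E →L[ℂ] E)
    (h11 : Q₁ * adjoint Q₁ + adjoint Q₁ * Q₁ = (2 : ℂ) • H₁)
    (h22 : Q₂ * adjoint Q₂ + adjoint Q₂ * Q₂ = (2 : ℂ) • H₂)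
    (h12 : Q₁ * adjoint Q₂ + adjoint Q₂ * Q₁ = 0)
    (h21 : Q₂ * adjoint Q₁ + adjoint Q₁ * Q₂ = 0)
    (hnil : ∀ i j : Fin 2, (![Q₁, Q₂] i) * (![Q₁, Q₂] j)
        + (![Q₁, Q₂] j) * (![Q₁, Q₂] i) = 0)
    (t₁ t₂ : ℂ) (ht₁ : t₁ ≠ 0) (ht₂ : t₂ ≠ 0)
    (Qt : E →L[ℂ] E) (hQt : Qt = t₁ • Q₁ + t₂ • Q₂) :
    LinearMap.ker ((Qt * adjoint Qt + adjoint Qt * Qt : E →L[ℂ] E) : E →ₗ[ℂ] E) =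
      LinearMap.ker (H₁ : E →ₗ[ℂ] E) ⊓ LinearMap.ker (H₂ : E →ₗ[ℂ] E) := by
  have opid := n1sq_opid Q₁ Q₂ h12 h21 t₁ t₂ Qt hQt
  ext x
  simp only [LinearMap.mem_ker, Submodule.mem_inf, ContinuousLinearMap.coe_coe]
  constructor
  · intro hx
    have hinner : ⟪x, (Qt * adjoint Qt + adjoint Qt * Qt) x⟫_ℂ = 0 := by
      rw [show ((Qt * adjoint Qt + adjoint Qt * Qt) : E →L[ℂ] E) x = 0 from hx]
      simp
    rw [opid, add_apply, smul_apply, smul_apply, inner_add_right, inner_smul_right,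
      inner_smul_right, n1sq_key Q₁ x, n1sq_key Q₂ x, Complex.mul_conj,
      Complex.mul_conj] at hinner
    have hre : (Complex.normSq t₁) * (‖adjoint Q₁ x‖ ^ 2 + ‖Q₁ x‖ ^ 2)
        + (Complex.normSq t₂) * (‖adjoint Q₂ x‖ ^ 2 + ‖Q₂ x‖ ^ 2) = 0 := by
      exact_mod_cast hinner
    have hp₁ : 0 < Complex.normSq t₁ := Complex.normSq_pos.mpr ht₁
    have hp₂ : 0 < Complex.normSq t₂ := Complex.normSq_pos.mpr ht₂
    have r1nn : (0:ℝ) ≤ ‖adjoint Q₁ x‖ ^ 2 + ‖Q₁ x‖ ^ 2 := by positivity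
    have r2nn : (0:ℝ) ≤ ‖adjoint Q₂ x‖ ^ 2 + ‖Q₂ x‖ ^ 2 := by positivity
    have m1 := mul_nonneg hp₁.le r1nn
    have m2 := mul_nonneg hp₂.le r2nn
    have r1 : ‖adjoint Q₁ x‖ ^ 2 + ‖Q₁ x‖ ^ 2 = 0 := by
      have hz : Complex.normSq t₁ * (‖adjoint Q₁ x‖ ^ 2 + ‖Q₁ x‖ ^ 2) = 0 := by linarith
      exact (mul_eq_zero.mp hz).resolve_left hp₁.ne'
    have r2 : ‖adjoint Q₂ x‖ ^ 2 + ‖Q₂ x‖ ^ 2 = 0 := by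
      have hz : Complex.normSq t₂ * (‖adjoint Q₂ x‖ ^ 2 + ‖Q₂ x‖ ^ 2) = 0 := by linarith
      exact (mul_eq_zero.mp hz).resolve_left hp₂.ne'
    obtain ⟨n1', n1⟩ := (add_eq_zero_iff_of_nonneg (sq_nonneg _) (sq_nonneg _)).mp r1
    obtain ⟨n2', n2⟩ := (add_eq_zero_iff_of_nonneg (sq_nonneg _) (sq_nonneg _)).mp r2
    exact ⟨(n1sq_vanish Q₁ H₁ h11 x).mpr
        ⟨norm_eq_zero.mp (pow_eq_zero_iff two_ne_zero |>.mp n1),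
         norm_eq_zero.mp (pow_eq_zero_iff two_ne_zero |>.mp n1')⟩,
      (n1sq_vanish Q₂ H₂ h22 x).mpr
        ⟨norm_eq_zero.mp (pow_eq_zero_iff two_ne_zero |>.mp n2),
         norm_eq_zero.mp (pow_eq_zero_iff two_ne_zero |>.mp n2')⟩⟩
  · rintro ⟨hx₁, hx₂⟩
    obtain ⟨q1, q1'⟩ := (n1sq_vanish Q₁ H₁ h11 x).mp hx₁
    obtain ⟨q2, q2'⟩ := (n1sq_vanish Q₂ H₂ h22 x).mp hx₂
    rw [opid]
    simp only [add_apply, smul_apply, ContinuousLinearMap.mul_apply, q1, q1', q2, q2', map_zero,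
      add_zero, zero_add, smul_zero]
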